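/- arXiv:2602.02477 — 3 statements merged into one kernel-verified Lean document; each statement's English description precedes it below -/
import Mathlib

section
/- Let (Ω, 𝓕, μ) be a probability space, let S_1, …, S_m : Ω → {0,1} be mutually independent random variables, let g : {0,1}^m → [0,1] be nondecreasing with respect to the coordinatewise partial order on {0,1}^m, and let C : Ω → {0,1} satisfy μ({C = 1} ∩ {S = s}) = g(s) · μ({S = s}) for every s ∈ {0,1}^m, where S = (S_1, …, S_m). If μ(C = 1) > 0, then for every index i the conditional probability of subproblem correctness given a correct final answer is at least its unconditional probability: μ({S_i = 1} ∩ {C = 1}) / μ(C = 1) ≥ μ(S_i = 1). -/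
open MeasureTheory ProbabilityTheory

/-- Conditional-probability form of Lemma 2.1:
`μ(S_i = 1 | C = 1) ≥ μ(S_i = 1)`. -/
theorem stmt_1 {Ω : Type*} [MeasurableSpace Ω] (μ : Measure Ω) [IsProbabilityMeasure μ]
    (m : ℕ) (S : Fin m → Ω → Bool) (hSmeas : ∀ i, Measurable (S i))
    (hSindep : iIndepFun S μ)
    (g : (Fin m → Bool) → ℝ) (hg0 : ∀ s, 0 ≤ g s) (hg1 : ∀ s, g s ≤ 1)
    (hgmono : Monotone g)
    (C : Ω → Bool) (hCmeas : Measurable C)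
    (hC : ∀ s : Fin m → Bool,
      μ ({ω | C ω = true} ∩ {ω | (fun j => S j ω) = s})
        = ENNReal.ofReal (g s) * μ {ω | (fun j => S j ω) = s})
    (hCpos : 0 < μ {ω | C ω = true})
    (i : Fin m) :
    (μ ({ω | S i ω = true} ∩ {ω | C ω = true})).toReal / (μ {ω | C ω = true}).toReal
      ≥ (μ {ω | S i ω = true}).toReal := by
  classical
  set E : (Fin m → Bool) → Set Ω := fun s => {ω | (fun j => S j ω) = s} with hEdef
  have hEeq : ∀ s, E s = ⋂ j, S j ⁻¹' {s j} := by
    intro s; ext ω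
    simp [hEdef, funext_iff]
  have hEmeas : ∀ s, MeasurableSet (E s) := by
    intro s
    rw [hEeq]
    exact MeasurableSet.iInter fun j => (hSmeas j) (measurableSet_singleton _)
  have hprod : ∀ s, μ (E s) = ∏ j, μ (S j ⁻¹' {s j}) := by
    intro s
    rw [hEeq]
    exact hSindep.meas_iInter fun j => ⟨{s j}, measurableSet_singleton _, rfl⟩
  have hdisj : Pairwise (Function.onFun Disjoint E) := by
    intro s t hst
    simp only [Function.onFun, Set.disjoint_left]
    intro ω h1 h2
    exact hst ((show (fun j => S j ω) = s from h1).symm.trans h2)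
  have hsum : ∀ A : Set Ω, MeasurableSet A → μ A = ∑ s, μ (A ∩ E s) := by
    intro A hA
    have hcov : A = ⋃ s, A ∩ E s := by
      ext ω
      constructor
      · intro hω
        exact Set.mem_iUnion.2 ⟨fun j => S j ω, hω, rfl⟩
      · rintro hω
        obtain ⟨s, hs, -⟩ := Set.mem_iUnion.1 hω
        exact hs
    calc μ A = μ (⋃ s, A ∩ E s) := by rw [← hcov]
      _ = ∑' s, μ (A ∩ E s) := measure_iUnion
          (fun s t hst => ((hdisj hst).mono Set.inter_subset_right Set.inter_subset_right))
          (fun s => hA.inter (hEmeas s))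
      _ = ∑ s, μ (A ∩ E s) := tsum_fintype _
  set Ct : Set Ω := {ω | C ω = true} with hCtdef
  set Si : Set Ω := {ω | S i ω = true} with hSidef
  have hCtmeas : MeasurableSet Ct := hCmeas (measurableSet_singleton true)
  have hSimeas : MeasurableSet Si := (hSmeas i) (measurableSet_singleton true)
  -- ENNReal decomposition of μ Ct
  have hCtsum : μ Ct = ∑ s, ENNReal.ofReal (g s) * μ (E s) := by
    rw [hsum Ct hCtmeas]
    exact Finset.sum_congr rfl fun s _ => hC s
  -- decomposition of μ (Si ∩ Ct)
  have hinter : ∀ s, (Si ∩ Ct) ∩ E s = if s i = true then Ct ∩ E s else ∅ := by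
    intro s
    by_cases h : s i = true
    · rw [if_pos h]
      ext ω
      simp only [Set.mem_inter_iff, hSidef, hCtdef, hEdef, Set.mem_setOf_eq, Set.mem_empty_iff_false]
      constructor
      · rintro ⟨⟨-, hc⟩, hs⟩; exact ⟨hc, hs⟩
      · rintro ⟨hc, hs⟩
        exact ⟨⟨by rw [show S i ω = s i from congrFun hs i, h], hc⟩, hs⟩
    · rw [if_neg h]
      ext ω
      simp only [Set.mem_inter_iff, hSidef, hCtdef, hEdef, Set.mem_setOf_eq, Set.mem_empty_iff_false,
        iff_false]
      rintro ⟨⟨hsi, -⟩, hs⟩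
      exact h ((congrFun hs i).symm.trans hsi)
  have hSiCtsum : μ (Si ∩ Ct) = ∑ s, if s i = true then ENNReal.ofReal (g s) * μ (E s) else 0 := by
    rw [hsum (Si ∩ Ct) (hSimeas.inter hCtmeas)]
    refine Finset.sum_congr rfl fun s _ => ?_
    rw [hinter s]
    by_cases h : s i = true
    · rw [if_pos h, if_pos h, hC s]
    · rw [if_neg h, if_neg h, measure_empty]
  -- real quantities
  set r : Fin m → Bool → ℝ := fun j b => (μ (S j ⁻¹' {b})).toReal with hrdef
  set Q : (Fin m → Bool) → ℝ := fun s => (μ (E s)).toReal with hQdef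
  set W : (Fin m → Bool) → ℝ := fun s => ∏ j ∈ Finset.univ.erase i, r j (s j) with hWdef
  have hrnn : ∀ j b, 0 ≤ r j b := fun j b => ENNReal.toReal_nonneg
  have hWnn : ∀ s, 0 ≤ W s := fun s => Finset.prod_nonneg fun j _ => hrnn j (s j)
  have hQr : ∀ s, Q s = r i (s i) * W s := by
    intro s
    rw [hQdef, hWdef]
    simp only
    rw [hprod s, ENNReal.toReal_prod, ← Finset.mul_prod_erase Finset.univ _ (Finset.mem_univ i)]
  have hQnn : ∀ s, 0 ≤ Q s := fun s => ENNReal.toReal_nonneg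
  set p1 : ℝ := r i true with hp1def
  set p0 : ℝ := r i false with hp0def
  have hp1nn : 0 ≤ p1 := hrnn i true
  have hp0nn : 0 ≤ p0 := hrnn i false
  have hcompl : S i ⁻¹' {false} = (S i ⁻¹' {true})ᶜ := by
    ext ω; simp
  have hp01 : p0 = 1 - p1 := by
    rw [hp0def, hp1def, hrdef]
    simp only
    rw [hcompl, prob_compl_eq_one_sub ((hSmeas i) (measurableSet_singleton true)),
      ENNReal.toReal_sub_of_le prob_le_one ENNReal.one_ne_top, ENNReal.toReal_one]
  -- real sums
  have hterm_ne : ∀ s, ENNReal.ofReal (g s) * μ (E s) ≠ ⊤ :=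
    fun s => ENNReal.mul_ne_top ENNReal.ofReal_ne_top (measure_ne_top μ _)
  have hBreal : (μ Ct).toReal = ∑ s, g s * Q s := by
    rw [hCtsum, ENNReal.toReal_sum (fun s _ => hterm_ne s)]
    refine Finset.sum_congr rfl fun s _ => ?_
    rw [ENNReal.toReal_mul, ENNReal.toReal_ofReal (hg0 s)]
  have hAreal : (μ (Si ∩ Ct)).toReal = ∑ s, if s i = true then g s * Q s else 0 := by
    rw [hSiCtsum, ENNReal.toReal_sum]
    · refine Finset.sum_congr rfl fun s _ => ?_
      by_cases h : s i = true
      · rw [if_pos h, if_pos h, ENNReal.toReal_mul, ENNReal.toReal_ofReal (hg0 s)]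
      · rw [if_neg h, if_neg h, ENNReal.toReal_zero]
    · intro s _
      by_cases h : s i = true
      · rw [if_pos h]; exact hterm_ne s
      · rw [if_neg h]; exact ENNReal.zero_ne_top
  have hp1real : (μ Si).toReal = p1 := rfl
  -- split the sum
  set F1 : Finset (Fin m → Bool) := Finset.univ.filter (fun s => s i = true) with hF1def
  set F0 : Finset (Fin m → Bool) := Finset.univ.filter (fun s => ¬ s i = true) with hF0def
  have hAsum : (∑ s, if s i = true then g s * Q s else 0) = ∑ s ∈ F1, g s * Q s :=
    (Finset.sum_filter _ _).symm
  have hBsplit : (∑ s, g s * Q s) = (∑ s ∈ F1, g s * Q s) + ∑ s ∈ F0, g s * Q s :=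
    (Finset.sum_filter_add_sum_filter_not _ _ _).symm
  -- reindex F0 by F1
  have hWupd : ∀ s (b : Bool), W (Function.update s i b) = W s := by
    intro s b
    rw [hWdef]
    refine Finset.prod_congr rfl fun j hj => ?_
    rw [Function.update_of_ne (Finset.ne_of_mem_erase hj)]
  have hreindex : (∑ s ∈ F0, g s * Q s)
      = ∑ s ∈ F1, g (Function.update s i false) * Q (Function.update s i false) := by
    refine Finset.sum_nbij' (fun s => Function.update s i true)
      (fun s => Function.update s i false) ?_ ?_ ?_ ?_ ?_
    · intro s hs
      simp [hF1def, Function.update_self]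
    · intro s hs
      simp [hF0def, Function.update_self]
    · intro s hs
      have hsi : s i = false := by
        have := (Finset.mem_filter.1 hs).2
        simpa using this
      simp only [Function.update_idem]
      rw [← hsi, Function.update_eq_self]
    · intro s hs
      have hsi : s i = true := (Finset.mem_filter.1 hs).2
      simp only [Function.update_idem]
      rw [← hsi, Function.update_eq_self]
    · intro s hs
      have hsi : s i = false := by
        have := (Finset.mem_filter.1 hs).2
        simpa using this
      rw [Function.update_idem, ← hsi, Function.update_eq_self]
  -- key inequality: p1 * Σ₀ ≤ p0 * Σ₁
  have key : p1 * (∑ s ∈ F0, g s * Q s) ≤ p0 * ∑ s ∈ F1, g s * Q s := by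
    rw [hreindex, Finset.mul_sum, Finset.mul_sum]
    refine Finset.sum_le_sum fun s hs => ?_
    have hsi : s i = true := (Finset.mem_filter.1 hs).2
    have hle : Function.update s i false ≤ s := by
      intro j
      by_cases hj : j = i
      · subst hj; rw [Function.update_self]; exact Bool.false_le _
      · rw [Function.update_of_ne hj]
    have hgle : g (Function.update s i false) ≤ g s := hgmono hle
    have hQ1 : Q s = p1 * W s := by rw [hQr s, hsi]
    have hQ0 : Q (Function.update s i false) = p0 * W s := by
      rw [hQr, Function.update_self, hWupd]
    rw [hQ0, hQ1]
    calc p1 * (g (Function.update s i false) * (p0 * W s))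
        = g (Function.update s i false) * (p1 * p0 * W s) := by ring
      _ ≤ g s * (p1 * p0 * W s) :=
          mul_le_mul_of_nonneg_right hgle (mul_nonneg (mul_nonneg hp1nn hp0nn) (hWnn s))
      _ = p0 * (g s * (p1 * W s)) := by ring
  -- assemble
  have hBpos : 0 < (μ Ct).toReal := ENNReal.toReal_pos hCpos.ne' (measure_ne_top μ _)
  rw [ge_iff_le, le_div_iff₀ hBpos, hp1real, hAreal, hBreal, hAsum, hBsplit]
  calc p1 * ((∑ s ∈ F1, g s * Q s) + ∑ s ∈ F0, g s * Q s)
      = p1 * (∑ s ∈ F1, g s * Q s) + p1 * (∑ s ∈ F0, g s * Q s) := by ring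
    _ ≤ p1 * (∑ s ∈ F1, g s * Q s) + p0 * (∑ s ∈ F1, g s * Q s) := by linarith [key]
    _ = ∑ s ∈ F1, g s * Q s := by rw [hp01]; ring
end

section
/- Let (Ω, 𝓕, μ) be a probability space, let S_1, …, S_m : Ω → {0,1} be mutually independent random variables, let g : {0,1}^m → [0,1] be nondecreasing with respect to the coordinatewise partial order on {0,1}^m, and let C : Ω → {0,1} satisfy μ({C = 1} ∩ {S = s}) = g(s) · μ({S = s}) for every s ∈ {0,1}^m, where S = (S_1, …, S_m). If μ(C = 0) > 0, then for every index i the conditional probability of subproblem correctness given an incorrect final answer is at most its unconditional probability: μ({S_i = 1} ∩ {C = 0}) / μ(C = 0) ≤ μ(S_i = 1). -/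
open MeasureTheory ProbabilityTheory

/-- Converse direction of Lemma 2.1: conditioning on an incorrect final answer lowers
the probability of subproblem correctness: `μ(S_i = 1 | C = 0) ≤ μ(S_i = 1)`. -/
theorem stmt_9 {Ω : Type*} [MeasurableSpace Ω] (μ : Measure Ω) [IsProbabilityMeasure μ]
    (m : ℕ) (S : Fin m → Ω → Bool) (hSmeas : ∀ i, Measurable (S i))
    (hSindep : iIndepFun S μ)
    (g : (Fin m → Bool) → ℝ) (hg0 : ∀ s, 0 ≤ g s) (hg1 : ∀ s, g s ≤ 1)
    (hgmono : Monotone g)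
    (C : Ω → Bool) (hCmeas : Measurable C)
    (hC : ∀ s : Fin m → Bool,
      μ ({ω | C ω = true} ∩ {ω | (fun j => S j ω) = s})
        = ENNReal.ofReal (g s) * μ {ω | (fun j => S j ω) = s})
    (hCpos : 0 < μ {ω | C ω = false})
    (i : Fin m) :
    (μ ({ω | S i ω = true} ∩ {ω | C ω = false})).toReal / (μ {ω | C ω = false}).toReal
      ≤ (μ {ω | S i ω = true}).toReal := by
  classical
  set A : (Fin m → Bool) → Set Ω := fun s => {ω | (fun j => S j ω) = s} with hA
  have hAeq : ∀ s, A s = ⋂ j, (S j) ⁻¹' {s j} := by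
    intro s
    ext ω
    simp [hA, funext_iff, Set.mem_iInter]
  have hAm : ∀ s, MeasurableSet (A s) := by
    intro s
    rw [hAeq]
    exact MeasurableSet.iInter fun j => (hSmeas j) (measurableSet_singleton _)
  have hAne : ∀ s, μ (A s) ≠ ⊤ := fun s => measure_ne_top μ _
  -- partition lemma
  have H1 : ∀ T : Set Ω, MeasurableSet T → μ T = ∑ s : Fin m → Bool, μ (T ∩ A s) := by
    intro T hT
    have hcover : (⋃ s : Fin m → Bool, T ∩ A s) = T := by
      ext ω
      simp only [Set.mem_iUnion, Set.mem_inter_iff]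
      constructor
      · rintro ⟨s, hs, _⟩; exact hs
      · intro h; exact ⟨fun j => S j ω, h, rfl⟩
    have hdisj : Pairwise (Function.onFun Disjoint fun s => T ∩ A s) := by
      intro s t hst
      refine Set.disjoint_left.2 ?_
      rintro ω ⟨_, hs⟩ ⟨_, ht⟩
      exact hst (hs.symm.trans ht)
    calc μ T = μ (⋃ s : Fin m → Bool, T ∩ A s) := by rw [hcover]
      _ = ∑ s : Fin m → Bool, μ (T ∩ A s) := by
          rw [measure_iUnion hdisj fun s => hT.inter (hAm s), tsum_fintype]
  have hCf : MeasurableSet {ω | C ω = false} := hCmeas (measurableSet_singleton _)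
  have hCt : MeasurableSet {ω | C ω = true} := hCmeas (measurableSet_singleton _)
  -- r s = μ({C=0} ∩ A s), and its real value
  set r : (Fin m → Bool) → ℝ := fun s => (μ ({ω | C ω = false} ∩ A s)).toReal with hr
  set P : (Fin m → Bool) → ℝ := fun s => (μ (A s)).toReal with hP
  have hPnn : ∀ s, 0 ≤ P s := fun s => ENNReal.toReal_nonneg
  have hrval : ∀ s, r s = (1 - g s) * P s := by
    intro s
    have hsplit : μ ({ω | C ω = true} ∩ A s) + μ ({ω | C ω = false} ∩ A s) = μ (A s) := by
      have h1 : A s ∩ {ω | C ω = true} = {ω | C ω = true} ∩ A s := Set.inter_comm _ _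
      have h2 : A s \ {ω | C ω = true} = {ω | C ω = false} ∩ A s := by
        ext ω
        simp [Set.mem_diff, Bool.not_eq_true, Set.inter_comm, and_comm]
      rw [← measure_inter_add_diff (A s) hCt, h1, h2]
    have hgP : (μ ({ω | C ω = true} ∩ A s)).toReal = g s * P s := by
      rw [hC s, ENNReal.toReal_mul, ENNReal.toReal_ofReal (hg0 s)]
    have := congrArg ENNReal.toReal hsplit
    rw [ENNReal.toReal_add (measure_ne_top μ _) (measure_ne_top μ _), hgP] at this
    simp only [hr, hP] at *
    linarith
  -- independence factorization
  set pj : Fin m → Bool → ℝ := fun j b => (μ {ω | S j ω = b}).toReal with hpj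
  have hpjnn : ∀ j b, 0 ≤ pj j b := fun j b => ENNReal.toReal_nonneg
  have hPfact : ∀ s, P s = ∏ j, pj j (s j) := by
    intro s
    have : μ (A s) = ∏ j, μ ((S j) ⁻¹' {s j}) := by
      rw [hAeq]
      exact hSindep.meas_iInter fun j => ⟨{s j}, measurableSet_singleton _, rfl⟩
    rw [hP]
    simp only [this, ENNReal.toReal_prod]
    rfl
  set W : (Fin m → Bool) → ℝ := fun s => ∏ j ∈ Finset.univ.erase i, pj j (s j) with hW
  have hWnn : ∀ s, 0 ≤ W s := fun s => Finset.prod_nonneg fun j _ => hpjnn j (s j)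
  have hPW : ∀ s, P s = pj i (s i) * W s := by
    intro s
    rw [hPfact, ← Finset.mul_prod_erase Finset.univ _ (Finset.mem_univ i)]
  have hWupd : ∀ s b, W (Function.update s i b) = W s := by
    intro s b
    refine Finset.prod_congr rfl fun j hj => ?_
    rw [Function.update_of_ne (Finset.ne_of_mem_erase hj)]
  set p : ℝ := pj i true with hp
  set q : ℝ := pj i false with hq
  have hpq : p + q = 1 := by
    have hm : MeasurableSet {ω | S i ω = true} := hSmeas i (measurableSet_singleton true)
    have hcompl : {ω | S i ω = false} = {ω | S i ω = true}ᶜ := by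
      ext ω; simp [Bool.not_eq_true]
    have := measure_add_measure_compl (μ := μ) hm
    rw [← hcompl] at this
    have h2 := congrArg ENNReal.toReal this
    rw [ENNReal.toReal_add (measure_ne_top μ _) (measure_ne_top μ _), measure_univ] at h2
    simpa [hp, hq, hpj] using h2
  -- numerator decomposition
  have hnum : (μ ({ω | S i ω = true} ∩ {ω | C ω = false})).toReal
      = ∑ s ∈ Finset.univ.filter (fun s : Fin m → Bool => s i = true), r s := by
    have hm : MeasurableSet ({ω | S i ω = true} ∩ {ω | C ω = false}) :=
      ((hSmeas i) (measurableSet_singleton _)).inter hCf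
    rw [H1 _ hm, ENNReal.toReal_sum (fun s _ => measure_ne_top μ _), Finset.sum_filter]
    refine Finset.sum_congr rfl fun s _ => ?_
    by_cases hsi : s i = true
    · rw [if_pos hsi]
      have hset : {ω | S i ω = true} ∩ {ω | C ω = false} ∩ A s
          = {ω | C ω = false} ∩ A s := by
        ext ω
        simp only [Set.mem_inter_iff, Set.mem_setOf_eq, hA]
        constructor
        · rintro ⟨⟨_, h2⟩, h3⟩; exact ⟨h2, h3⟩
        · rintro ⟨h2, h3⟩
          refine ⟨⟨?_, h2⟩, h3⟩
          rw [show S i ω = (fun j => S j ω) i from rfl, h3, hsi]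
      rw [hset]
    · rw [if_neg hsi]
      have : {ω | S i ω = true} ∩ {ω | C ω = false} ∩ A s = ∅ := by
        ext ω
        simp only [Set.mem_inter_iff, Set.mem_setOf_eq, Set.mem_empty_iff_false, iff_false, hA]
        rintro ⟨⟨h1, _⟩, h3⟩
        exact hsi (by rw [← h3]; exact h1)
      rw [this]
      simp
  -- denominator decomposition
  have hden : (μ {ω | C ω = false}).toReal = ∑ s : Fin m → Bool, r s := by
    rw [H1 _ hCf, ENNReal.toReal_sum (fun s _ => measure_ne_top μ _)]
  -- reduce to the algebraic inequality
  have hBpos : 0 < (μ {ω | C ω = false}).toReal :=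
    ENNReal.toReal_pos hCpos.ne' (measure_ne_top μ _)
  rw [div_le_iff₀ hBpos]
  have hgoalRHS : (μ {ω | S i ω = true}).toReal = p := rfl
  rw [hgoalRHS, hnum, hden]
  -- split the full sum into s i = true and s i = false parts
  have hsplit := Finset.sum_filter_add_sum_filter_not Finset.univ
    (fun s : Fin m → Bool => s i = true) r
  rw [← hsplit]
  -- reindex the false part onto the true part
  have hreindex : ∑ s ∈ Finset.univ.filter (fun s : Fin m → Bool => ¬ s i = true), r s
      = ∑ s ∈ Finset.univ.filter (fun s : Fin m → Bool => s i = true),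
          r (Function.update s i false) := by
    refine Finset.sum_bij' (fun s _ => Function.update s i true)
      (fun s _ => Function.update s i false) ?_ ?_ ?_ ?_ ?_
    · intro s hs
      simp [Function.update_self]
    · intro s hs
      simp [Function.update_self]
    · intro s hs
      simp only [Finset.mem_filter, Finset.mem_univ, true_and, Bool.not_eq_true] at hs
      show Function.update (Function.update s i true) i false = s
      rw [Function.update_idem, ← hs, Function.update_eq_self]
    · intro s hs
      simp only [Finset.mem_filter, Finset.mem_univ, true_and] at hs
      show Function.update (Function.update s i false) i true = s
      rw [Function.update_idem, ← hs, Function.update_eq_self]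
    · intro s hs
      simp only [Finset.mem_filter, Finset.mem_univ, true_and, Bool.not_eq_true] at hs
      show r s = r (Function.update (Function.update s i true) i false)
      rw [Function.update_idem, ← hs, Function.update_eq_self]
  rw [hreindex, ← Finset.sum_add_distrib, Finset.mul_sum]
  refine Finset.sum_le_sum fun s hs => ?_
  simp only [Finset.mem_filter, Finset.mem_univ, true_and] at hs
  have hle : Function.update s i false ≤ s := by
    intro j
    by_cases hj : j = i
    · subst hj; rw [Function.update_self]; exact Bool.false_le _
    · rw [Function.update_of_ne hj]
  have hgle : g (Function.update s i false) ≤ g s := hgmono hle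
  have h1 : r s = (1 - g s) * (p * W s) := by
    rw [hrval s, hPW s, hs, ← hp]
  have h2 : r (Function.update s i false) = (1 - g (Function.update s i false)) * (q * W s) := by
    rw [hrval _, hPW _, Function.update_self, ← hq, hWupd]
  rw [h1, h2]
  have hpnn : 0 ≤ p := hpjnn i true
  have hqnn : 0 ≤ q := hpjnn i false
  nlinarith [hWnn s, hpnn, hqnn, hpq,
    mul_nonneg (mul_nonneg (mul_nonneg hpnn hqnn) (hWnn s)) (sub_nonneg.2 hgle),
    mul_nonneg (mul_nonneg hpnn (hWnn s)) (sub_nonneg.2 (hg1 s))]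
end

section
/- Let (Ω, 𝓕, μ) be a probability space, let S_1, …, S_m : Ω → {0,1} be mutually independent random variables with 0 < μ(S_i = 1) < 1 for a fixed index i, let g : {0,1}^m → [0,1] be nondecreasing with respect to the coordinatewise partial order and strictly increasing in coordinate i (meaning g(s_{-i}; 1) > g(s_{-i}; 0) for every configuration s_{-i} ∈ {0,1}^{m−1} of the other coordinates), and let C : Ω → {0,1} satisfy μ({C = 1} ∩ {S = s}) = g(s) · μ({S = s}) for every s ∈ {0,1}^m, where S = (S_1, …, S_m). Then the covariance of S_i and C is strictly positive: E[S_i · C] − E[S_i] · E[C] > 0. -/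
open MeasureTheory ProbabilityTheory

/-- Strict-inequality refinement of Lemma 2.1: if `0 < μ(S_i = 1) < 1` and `g` is
nondecreasing and strictly increasing in coordinate `i`, then `Cov(S_i, C) > 0`. -/
theorem stmt_10 {Ω : Type*} [MeasurableSpace Ω] (μ : Measure Ω) [IsProbabilityMeasure μ]
    (m : ℕ) (S : Fin m → Ω → Bool) (hSmeas : ∀ j, Measurable (S j))
    (hSindep : iIndepFun S μ)
    (i : Fin m)
    (hSipos : 0 < μ {ω | S i ω = true}) (hSilt : μ {ω | S i ω = true} < 1)
    (g : (Fin m → Bool) → ℝ) (hg0 : ∀ s, 0 ≤ g s) (hg1 : ∀ s, g s ≤ 1)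
    (hgmono : Monotone g)
    (hgstrict : ∀ s : Fin m → Bool,
      g (fun j => if j = i then true else s j) > g (fun j => if j = i then false else s j))
    (C : Ω → Bool) (hCmeas : Measurable C)
    (hC : ∀ s : Fin m → Bool,
      μ ({ω | C ω = true} ∩ {ω | (fun j => S j ω) = s})
        = ENNReal.ofReal (g s) * μ {ω | (fun j => S j ω) = s}) :
    ∫ ω, (if S i ω then (1 : ℝ) else 0) * (if C ω then (1 : ℝ) else 0) ∂μ
      - (∫ ω, (if S i ω then (1 : ℝ) else 0) ∂μ)
        * (∫ ω, (if C ω then (1 : ℝ) else 0) ∂μ) > 0 := by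
  classical
  -- the atoms of the partition
  set A : (Fin m → Bool) → Set Ω := fun s => {ω | (fun j => S j ω) = s} with hA
  have hAeq : ∀ s, A s = ⋂ j, (S j) ⁻¹' {s j} := by
    intro s; ext ω; simp [hA, funext_iff]
  have hAmeas : ∀ s, MeasurableSet (A s) := by
    intro s; rw [hAeq]
    exact MeasurableSet.iInter fun j => (hSmeas j) (measurableSet_singleton _)
  have hAdisj : Pairwise (Function.onFun Disjoint A) := by
    intro s t hst
    refine Set.disjoint_left.2 fun ω hs ht => hst ?_
    simp only [hA, Set.mem_setOf_eq] at hs ht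
    rw [← hs, ← ht]
  have hAcover : (⋃ s, A s) = Set.univ := by
    ext ω; simp only [Set.mem_iUnion, Set.mem_univ, iff_true]
    exact ⟨fun j => S j ω, rfl⟩
  have hpart : ∀ B : Set Ω, MeasurableSet B → μ B = ∑ s, μ (B ∩ A s) := by
    intro B hB
    calc μ B = μ (⋃ s, B ∩ A s) := by rw [← Set.inter_iUnion, hAcover, Set.inter_univ]
      _ = ∑' s, μ (B ∩ A s) := measure_iUnion (fun s t hst => (hAdisj hst).mono
            Set.inter_subset_right Set.inter_subset_right) (fun s => hB.inter (hAmeas s))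
      _ = ∑ s, μ (B ∩ A s) := tsum_fintype _
  -- measurable sets
  have hmSi : MeasurableSet {ω | S i ω = true} := (hSmeas i) (measurableSet_singleton true)
  have hmC : MeasurableSet {ω | C ω = true} := hCmeas (measurableSet_singleton true)
  -- integrals as measures
  have hIS : (∫ ω, (if S i ω then (1 : ℝ) else 0) ∂μ) = (μ {ω | S i ω = true}).toReal := by
    have h : ∀ ω, (if S i ω then (1 : ℝ) else 0)
        = Set.indicator {ω | S i ω = true} (1 : Ω → ℝ) ω := by
      intro ω; by_cases h : S i ω = true <;> simp [Set.indicator, h]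
    simp_rw [h]
    exact integral_indicator_one hmSi
  have hIC : (∫ ω, (if C ω then (1 : ℝ) else 0) ∂μ) = (μ {ω | C ω = true}).toReal := by
    have h : ∀ ω, (if C ω then (1 : ℝ) else 0)
        = Set.indicator {ω | C ω = true} (1 : Ω → ℝ) ω := by
      intro ω; by_cases h : C ω = true <;> simp [Set.indicator, h]
    simp_rw [h]
    exact integral_indicator_one hmC
  have hISC : (∫ ω, (if S i ω then (1 : ℝ) else 0) * (if C ω then (1 : ℝ) else 0) ∂μ)
      = (μ ({ω | S i ω = true} ∩ {ω | C ω = true})).toReal := by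
    have h : ∀ ω, (if S i ω then (1 : ℝ) else 0) * (if C ω then (1 : ℝ) else 0)
        = Set.indicator ({ω | S i ω = true} ∩ {ω | C ω = true}) (1 : Ω → ℝ) ω := by
      intro ω
      by_cases h1 : S i ω = true <;> by_cases h2 : C ω = true <;>
        simp [Set.indicator, h1, h2]
    simp_rw [h]
    exact integral_indicator_one (hmSi.inter hmC)
  -- the filter of configurations with coordinate i true
  set T : Finset (Fin m → Bool) := Finset.univ.filter (fun s => s i = true) with hT
  -- measure identities
  have hP : ∀ s, μ (A s) ≠ ⊤ := fun s => measure_ne_top μ _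
  have hCsum : μ {ω | C ω = true} = ∑ s, ENNReal.ofReal (g s) * μ (A s) := by
    rw [hpart _ hmC]
    exact Finset.sum_congr rfl fun s _ => hC s
  have hSiA : ∀ s : Fin m → Bool, s i = true → A s ⊆ {ω | S i ω = true} := by
    intro s hs ω hω
    simp only [hA, Set.mem_setOf_eq] at hω ⊢
    rw [show S i ω = s i from congrFun hω i, hs]
  have hSiA' : ∀ s : Fin m → Bool, s i = false → A s ∩ {ω | S i ω = true} = ∅ := by
    intro s hs
    ext ω
    simp only [hA, Set.mem_inter_iff, Set.mem_setOf_eq, Set.mem_empty_iff_false, iff_false,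
      not_and]
    intro hω
    rw [show S i ω = s i from congrFun hω i, hs]; simp
  have hSCsum : μ ({ω | S i ω = true} ∩ {ω | C ω = true})
      = ∑ s ∈ T, ENNReal.ofReal (g s) * μ (A s) := by
    rw [hpart _ (hmSi.inter hmC)]
    rw [show (∑ s ∈ T, ENNReal.ofReal (g s) * μ (A s))
      = ∑ s, if s i = true then ENNReal.ofReal (g s) * μ (A s) else 0 from
      (Finset.sum_filter _ _)]
    refine Finset.sum_congr rfl fun s _ => ?_
    by_cases hs : s i = true
    · rw [if_pos hs]
      have : {ω | S i ω = true} ∩ {ω | C ω = true} ∩ A s = {ω | C ω = true} ∩ A s := by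
        have h1 := hSiA s hs
        ext ω
        constructor
        · rintro ⟨⟨_, h2⟩, h3⟩; exact ⟨h2, h3⟩
        · rintro ⟨h2, h3⟩; exact ⟨⟨h1 h3, h2⟩, h3⟩
      rw [this]
      exact hC s
    · rw [if_neg hs]
      have hs' : s i = false := by simpa using hs
      have : {ω | S i ω = true} ∩ {ω | C ω = true} ∩ A s = ∅ := by
        rw [Set.inter_right_comm, Set.inter_comm {ω | S i ω = true}, hSiA' s hs']
        simp
      rw [this, measure_empty]
  have hSsum : μ {ω | S i ω = true} = ∑ s ∈ T, μ (A s) := by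
    rw [hpart _ hmSi]
    rw [show (∑ s ∈ T, μ (A s)) = ∑ s, if s i = true then μ (A s) else 0 from
      (Finset.sum_filter _ _)]
    refine Finset.sum_congr rfl fun s _ => ?_
    by_cases hs : s i = true
    · rw [if_pos hs, Set.inter_eq_right.2 (hSiA s hs)]
    · rw [if_neg hs]
      have hs' : s i = false := by simpa using hs
      rw [Set.inter_comm, hSiA' s hs', measure_empty]
  -- product structure
  have hprod : ∀ s, μ (A s) = ∏ j, μ ((S j) ⁻¹' {s j}) := by
    intro s
    rw [hAeq]
    exact hSindep.meas_iInter fun j => ⟨{s j}, measurableSet_singleton _, rfl⟩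
  -- real quantities
  set pr : ℝ := (μ {ω | S i ω = true}).toReal with hpr
  set a : (Fin m → Bool) → ℝ := fun s => (μ (A s)).toReal with ha
  set r : (Fin m → Bool) → ℝ :=
    fun s => ∏ j ∈ Finset.univ.erase i, (μ ((S j) ⁻¹' {s j})).toReal with hr
  have hrnonneg : ∀ s, 0 ≤ r s := fun s => Finset.prod_nonneg fun j _ => ENNReal.toReal_nonneg
  have hq : ∀ s : Fin m → Bool, a s = (μ ((S i) ⁻¹' {s i})).toReal * r s := by
    intro s
    rw [ha]
    simp only
    rw [hprod s, ENNReal.toReal_prod, ← Finset.mul_prod_erase _ _ (Finset.mem_univ i)]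
  have hqt : (μ ((S i) ⁻¹' {true})).toReal = pr := by
    congr 1
  have hqf : (μ ((S i) ⁻¹' {false})).toReal = 1 - pr := by
    have hc : (S i) ⁻¹' {false} = {ω | S i ω = true}ᶜ := by
      ext ω; simp
    rw [hc, prob_compl_eq_one_sub hmSi, ENNReal.toReal_sub_of_le hSilt.le ENNReal.one_ne_top]
    simp [hpr]
  have hpr01 : 0 < pr := ENNReal.toReal_pos hSipos.ne' (measure_ne_top μ _)
  have hpr1 : pr < 1 := by
    have h := (ENNReal.toReal_lt_toReal (measure_ne_top μ {ω | S i ω = true})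
      ENNReal.one_ne_top).2 hSilt
    simpa using h
  -- real versions of the sums
  have hICr : (μ {ω | C ω = true}).toReal = ∑ s, g s * a s := by
    rw [hCsum, ENNReal.toReal_sum (fun s _ => ENNReal.mul_ne_top ENNReal.ofReal_ne_top (hP s))]
    exact Finset.sum_congr rfl fun s _ => by
      rw [ENNReal.toReal_mul, ENNReal.toReal_ofReal (hg0 s)]
  have hISCr : (μ ({ω | S i ω = true} ∩ {ω | C ω = true})).toReal = ∑ s ∈ T, g s * a s := by
    rw [hSCsum, ENNReal.toReal_sum (fun s _ => ENNReal.mul_ne_top ENNReal.ofReal_ne_top (hP s))]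
    exact Finset.sum_congr rfl fun s _ => by
      rw [ENNReal.toReal_mul, ENNReal.toReal_ofReal (hg0 s)]
  have hISr : pr = ∑ s ∈ T, a s := by
    rw [hpr, hSsum, ENNReal.toReal_sum (fun s _ => hP s)]
  -- on T, a s = pr * r s
  have haT : ∀ s ∈ T, a s = pr * r s := by
    intro s hs
    have hsi : s i = true := (Finset.mem_filter.1 hs).2
    rw [hq s, hsi, hqt]
  -- flipping coordinate i
  have hrupd : ∀ (s : Fin m → Bool) (b : Bool), r (Function.update s i b) = r s := by
    intro s b
    refine Finset.prod_congr rfl fun j hj => ?_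
    rw [Function.update_of_ne (Finset.ne_of_mem_erase hj)]
  -- reindex the complement sum
  have hsplit : (∑ s, g s * a s)
      = ∑ s ∈ T, g s * a s + ∑ s ∈ T, g (Function.update s i false) * ((1 - pr) * r s) := by
    rw [← Finset.sum_filter_add_sum_filter_not Finset.univ (fun s => s i = true)
      (fun s => g s * a s)]
    congr 1
    have h1 : ∀ s ∈ T, g (Function.update s i false) * ((1 - pr) * r s)
        = g (Function.update s i false) * a (Function.update s i false) := by
      intro s hs
      rw [hq (Function.update s i false), Function.update_self, hqf, hrupd]
    rw [Finset.sum_congr rfl h1]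
    refine Finset.sum_nbij' (fun s => Function.update s i true)
      (fun s => Function.update s i false) ?_ ?_ ?_ ?_ ?_
    · intro s hs
      simp only [hT, Finset.mem_filter, Finset.mem_univ, true_and]
      rw [Function.update_self]
    · intro s hs
      simp only [Finset.mem_filter, Finset.mem_univ, true_and]
      rw [Function.update_self]
      simp
    · intro s hs
      simp only [Finset.mem_filter, Finset.mem_univ, true_and] at hs
      have hs' : s i = false := by simpa using hs
      funext j
      by_cases hj : j = i
      · subst hj; simp [hs']
      · simp [Function.update_of_ne hj]
    · intro s hs
      simp only [hT, Finset.mem_filter, Finset.mem_univ, true_and] at hs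
      funext j
      by_cases hj : j = i
      · subst hj; simp [hs]
      · simp [Function.update_of_ne hj]
    · intro s hs
      simp only [Finset.mem_filter, Finset.mem_univ, true_and] at hs
      have hs' : s i = false := by simpa using hs
      have he : Function.update (Function.update s i true) i false = s := by
        funext j
        by_cases hj : j = i
        · subst hj; simp [hs']
        · simp [Function.update_of_ne hj]
      simp only [he]
  -- key sums
  set X : ℝ := ∑ s ∈ T, r s * g s with hX
  set Y : ℝ := ∑ s ∈ T, r s * g (Function.update s i false) with hY
  have hI3 : (∑ s ∈ T, g s * a s) = pr * X := by
    rw [hX, Finset.mul_sum]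
    exact Finset.sum_congr rfl fun s hs => by rw [haT s hs]; ring
  have hI2 : (∑ s, g s * a s) = pr * X + (1 - pr) * Y := by
    rw [hsplit, hI3]
    congr 1
    have h2 : ∀ s ∈ T, g (Function.update s i false) * ((1 - pr) * r s)
        = (1 - pr) * (r s * g (Function.update s i false)) := fun s _ => by ring
    rw [Finset.sum_congr rfl h2, ← Finset.mul_sum, ← hY]
  have hrsum : (∑ s ∈ T, r s) = 1 := by
    have h1 : pr = pr * ∑ s ∈ T, r s := by
      calc pr = ∑ s ∈ T, a s := hISr
        _ = ∑ s ∈ T, pr * r s := Finset.sum_congr rfl haT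
        _ = pr * ∑ s ∈ T, r s := (Finset.mul_sum _ _ _).symm
    have h2 : pr * 1 = pr * ∑ s ∈ T, r s := by rw [mul_one]; exact h1
    exact (mul_left_cancel₀ hpr01.ne' h2).symm
  -- strict inequality X > Y
  have hgT : ∀ s ∈ T, g (Function.update s i false) < g s := by
    intro s hs
    have hsi : s i = true := (Finset.mem_filter.1 hs).2
    have h := hgstrict s
    have e1 : (fun j => if j = i then true else s j) = s := by
      funext j; by_cases hj : j = i
      · subst hj; simp [hsi]
      · simp [hj]
    have e2 : (fun j => if j = i then false else s j) = Function.update s i false := by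
      funext j; by_cases hj : j = i
      · subst hj; simp
      · simp [hj, Function.update_of_ne hj]
    rw [e1, e2] at h
    exact h
  have hXY : 0 < X - Y := by
    rw [hX, hY, ← Finset.sum_sub_distrib]
    have hTne : ∃ s ∈ T, 0 < r s := by
      by_contra h
      push_neg at h
      have : (∑ s ∈ T, r s) = 0 := Finset.sum_eq_zero fun s hs =>
        le_antisymm (h s hs) (hrnonneg s)
      rw [hrsum] at this; norm_num at this
    obtain ⟨s₀, hs₀, hr₀⟩ := hTne
    refine Finset.sum_pos' (fun s hs => ?_) ⟨s₀, hs₀, ?_⟩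
    · have := hgT s hs
      nlinarith [hrnonneg s]
    · have := hgT s₀ hs₀
      nlinarith
  -- assemble
  rw [hISC, hISCr, hIS, hIC, hICr, hI3, hI2]
  have key : pr * X - pr * (pr * X + (1 - pr) * Y) = pr * (1 - pr) * (X - Y) := by ring
  rw [key]
  exact mul_pos (mul_pos hpr01 (by linarith)) hXY
end
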